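/- (Cyclic lemma for densities.) Let h : ℝ → [0,∞) be a measurable probability density (∫_ℝ h(x) dx = 1). For every n ≥ 1, ∫_{ℝ^n} ∏_{i=0}^{n} h(x_{i+1} − x_i) dx_1 ⋯ dx_n = (n+1) · ∫_{(0,∞)^n} ∏_{i=0}^{n} h(x_{i+1} − x_i) dx_1 ⋯ dx_n, where in both integrals x_0 := 0 and x_{n+1} := 0. Equivalently, the (n+1)-fold convolution density value h^{*(n+1)}(0) := ∫_{ℝ^n} ∏_{i=0}^{n} h(x_{i+1} − x_i) dx equals (n+1) times the integral of the same integrand restricted to the positive orthant. -/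

import Mathlib

open Filter Finset MeasureTheory
open scoped ENNReal NNReal
open scoped Fin.NatCast Fin.CommRing

namespace Stmt13
variable {n : ℕ}

noncomputable def uu (x : Fin n → ℝ) : Fin (n + 1) → ℝ := Fin.cons 0 x

@[simp] lemma uu_zero (x : Fin n → ℝ) : uu x 0 = 0 := rfl
@[simp] lemma uu_succ (x : Fin n → ℝ) (i : Fin n) : uu x i.succ = x i := rfl

noncomputable def TT (x : Fin n → ℝ) : Fin n → ℝ := fun i => uu x (i.succ + 1) - uu x 1

lemma uu_TT (x : Fin n → ℝ) (j : Fin (n + 1)) : uu (TT x) j = uu x (j + 1) - uu x 1 := by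
  induction j using Fin.cases with
  | zero => simp
  | succ i => rfl

lemma uu_iter (x : Fin n → ℝ) (m : ℕ) (j : Fin (n + 1)) :
    uu (TT^[m] x) j = uu x (j + (m : Fin (n + 1))) - uu x (m : Fin (n + 1)) := by
  induction m generalizing j with
  | zero => simp
  | succ m ih =>
      rw [Function.iterate_succ_apply', uu_TT, ih, ih]
      have h1 : j + 1 + (m : Fin (n + 1)) = j + ((m : ℕ) + 1 : ℕ) := by push_cast; ring
      have h2 : (1 : Fin (n + 1)) + (m : Fin (n + 1)) = (((m : ℕ) + 1 : ℕ) : Fin (n + 1)) := by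
        push_cast; ring
      rw [h1, h2]; ring

noncomputable def FF (h : ℝ → ℝ) (x : Fin n → ℝ) : ℝ≥0∞ :=
  ∏ i : Fin (n + 1), ENNReal.ofReal (h (uu x (i + 1) - uu x i))

lemma FF_TT (h : ℝ → ℝ) (x : Fin n → ℝ) : FF h (TT x) = FF h x := by
  unfold FF
  have key : ∀ i : Fin (n + 1), uu (TT x) (i + 1) - uu (TT x) i
      = uu x (i + 1 + 1) - uu x (i + 1) := by
    intro i; rw [uu_TT, uu_TT]; ring
  simp_rw [key]
  exact Equiv.prod_comp (Equiv.addRight (1 : Fin (n + 1)))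
    (fun i => ENNReal.ofReal (h (uu x (i + 1) - uu x i)))

lemma FF_iter (h : ℝ → ℝ) (x : Fin n → ℝ) (m : ℕ) : FF h (TT^[m] x) = FF h x := by
  induction m with
  | zero => rfl
  | succ m ih => rw [Function.iterate_succ_apply', FF_TT, ih]

lemma snoc_eq (x : Fin n → ℝ) (j : Fin (n + 1)) :
    (Fin.snoc x 0 : Fin (n + 1) → ℝ) j = uu x (j + 1) := by
  induction j using Fin.lastCases with
  | last => simp
  | cast k =>
      rw [Fin.snoc_castSucc]
      have : k.castSucc + 1 = k.succ := by
        apply Fin.ext; simp [Fin.val_add_one_of_lt (Fin.castSucc_lt_last k)]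
      rw [this, uu_succ]

lemma delta_eq (x : Fin n → ℝ) (i : Fin (n + 1)) :
    (Fin.cons 0 (Fin.snoc x 0) : Fin (n + 2) → ℝ) i.succ -
      (Fin.cons 0 (Fin.snoc x 0) : Fin (n + 2) → ℝ) i.castSucc = uu x (i + 1) - uu x i := by
  have h1 : (Fin.cons 0 (Fin.snoc x 0) : Fin (n + 2) → ℝ) i.succ = uu x (i + 1) := by
    rw [Fin.cons_succ, snoc_eq]
  have h2 : (Fin.cons 0 (Fin.snoc x 0) : Fin (n + 2) → ℝ) i.castSucc = uu x i := by
    induction i using Fin.cases with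
    | zero => simp
    | succ k =>
        rw [← Fin.succ_castSucc, Fin.cons_succ, Fin.snoc_castSucc, uu_succ]
  rw [h1, h2]

lemma integrand_eq (h : ℝ → ℝ) (x : Fin n → ℝ) :
    (∏ i : Fin (n + 1),
      ENNReal.ofReal (h ((Fin.cons 0 (Fin.snoc x 0) : Fin (n + 2) → ℝ) i.succ -
        (Fin.cons 0 (Fin.snoc x 0) : Fin (n + 2) → ℝ) i.castSucc))) = FF h x := by
  unfold FF; simp_rw [delta_eq]

/-! ### Measure preservation of the cyclic shift -/

lemma measurePreserving_of_det (f : (Fin n → ℝ) →ₗ[ℝ] (Fin n → ℝ)) (hf : |LinearMap.det f| = 1) :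
    MeasurePreserving f (volume : Measure (Fin n → ℝ)) volume := by
  have h0 : LinearMap.det f ≠ 0 := by
    intro h; rw [h] at hf; simp at hf
  refine ⟨f.continuous_of_finiteDimensional.measurable, ?_⟩
  rw [Real.map_linearMap_volume_pi_eq_smul_volume_pi h0, abs_inv, hf]
  simp

variable [NeZero n]

def MA : Matrix (Fin n) (Fin n) ℝ := fun i j =>
  if i = 0 then (if j = 0 then -1 else 0) else if j = i then 1 else if j = 0 then -1 else 0

lemma MA_det : (MA : Matrix (Fin n) (Fin n) ℝ).det = -1 := by
  rw [Matrix.det_of_lowerTriangular (MA) ?ht]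
  · have hd : ∀ i : Fin n, (MA : Matrix (Fin n) (Fin n) ℝ) i i = if i = 0 then -1 else 1 := by
      intro i; by_cases hi : i = 0 <;> simp [MA, hi]
    simp_rw [hd]
    rw [Finset.prod_ite_eq' Finset.univ (0 : Fin n) (fun _ => (-1 : ℝ))]
    simp
  · intro i j hij
    have hij' : (i : ℕ) < (j : ℕ) := hij
    have hj0 : j ≠ 0 := by rintro rfl; simp at hij'
    have hji : j ≠ i := by rintro rfl; omega
    by_cases hi : i = 0 <;> simp [MA, hi, hj0, hji]

lemma MA_mulVec (x : Fin n → ℝ) (j : Fin n) :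
    (MA : Matrix (Fin n) (Fin n) ℝ).mulVec x j = if j = 0 then -x 0 else x j - x 0 := by
  classical
  by_cases hj : j = 0
  · subst hj
    simp only [Matrix.mulVec, dotProduct, MA, if_pos rfl]
    rw [Finset.sum_eq_single (0 : Fin n)]
    · simp
    · intro b _ hb; simp [hb]
    · simp
  · simp only [Matrix.mulVec, dotProduct, MA, if_neg hj]
    have key : ∀ c : Fin n, (if c = j then (1 : ℝ) else if c = 0 then -1 else 0) * x c
        = (if c = j then x j else 0) + (if c = 0 then -x 0 else 0) := by
      intro c
      by_cases h1 : c = j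
      · subst h1; simp [hj]
      · by_cases h2 : c = 0 <;> simp [h1, h2, Ne.symm hj]
    simp_rw [key, Finset.sum_add_distrib, Finset.sum_ite_eq' Finset.univ, Finset.mem_univ,
      if_pos trivial]
    ring

lemma perm_mulVec (σ : Equiv.Perm (Fin n)) (x : Fin n → ℝ) (i : Fin n) :
    ((σ.permMatrix ℝ).mulVec x) i = x (σ i) := by
  simp [Matrix.mulVec, dotProduct, PEquiv.toMatrix_apply, Equiv.toPEquiv, Option.mem_def,
    ite_mul, one_mul, zero_mul, Finset.sum_ite_eq']

lemma uu_one (x : Fin n → ℝ) : uu x 1 = x 0 := by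
  have : (1 : Fin (n + 1)) = (0 : Fin n).succ := by
    apply Fin.ext
    rw [Fin.val_succ, Fin.val_zero, Fin.val_one']
    exact Nat.mod_eq_of_lt (by have := NeZero.pos n; omega)
  rw [this, uu_succ]

lemma TT_eq (x : Fin n → ℝ) :
    TT x = Matrix.toLin' ((Equiv.addRight (1 : Fin n)).permMatrix ℝ)
      (Matrix.toLin' (MA : Matrix (Fin n) (Fin n) ℝ) x) := by
  funext i
  rw [Matrix.toLin'_apply, Matrix.toLin'_apply, perm_mulVec, MA_mulVec]
  have hσ : (Equiv.addRight (1 : Fin n)) i = i + 1 := rfl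
  rw [hσ]
  show uu x (i.succ + 1) - uu x 1 = _
  rw [uu_one]
  have hn1 : 1 ≤ n := NeZero.pos n
  have hvadd : ∀ a b : Fin n, ((a + b : Fin n) : ℕ) = ((a : ℕ) + (b : ℕ)) % n := Fin.val_add
  have hvadd' : ∀ a b : Fin (n + 1), ((a + b : Fin (n + 1)) : ℕ)
      = ((a : ℕ) + (b : ℕ)) % (n + 1) := Fin.val_add
  have hv1' : ((1 : Fin (n + 1)) : ℕ) = 1 := by
    rw [Fin.val_one']; exact Nat.mod_eq_of_lt (by omega)
  by_cases hi : (i : ℕ) + 1 = n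
  · have h1 : i.succ + 1 = (0 : Fin (n + 1)) := by
      apply Fin.ext
      rw [hvadd', Fin.val_succ, hv1', Fin.val_zero, hi, Nat.mod_self]
    have h2 : i + 1 = (0 : Fin n) := by
      rcases eq_or_lt_of_le hn1 with hh | hh
      · have hs : Subsingleton (Fin n) := by rw [← hh]; infer_instance
        exact Subsingleton.elim _ _
      · have hv1 : ((1 : Fin n) : ℕ) = 1 := by rw [Fin.val_one']; exact Nat.mod_eq_of_lt hh
        apply Fin.ext
        rw [hvadd, hv1, Fin.val_zero, hi, Nat.mod_self]
    rw [h1, h2, if_pos rfl, uu_zero]; ring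
  · have hlt : (i : ℕ) + 1 < n := by have := i.isLt; omega
    have hv1 : ((1 : Fin n) : ℕ) = 1 := by rw [Fin.val_one']; exact Nat.mod_eq_of_lt (by omega)
    have h2 : (i + 1 : Fin n) ≠ 0 := by
      intro e
      have he : ((i + 1 : Fin n) : ℕ) = 0 := by rw [e, Fin.val_zero]
      rw [hvadd, hv1, Nat.mod_eq_of_lt hlt] at he
      omega
    have h1 : i.succ + 1 = (i + 1 : Fin n).succ := by
      apply Fin.ext
      rw [hvadd', Fin.val_succ, hv1', Fin.val_succ, hvadd, hv1,
        Nat.mod_eq_of_lt hlt, Nat.mod_eq_of_lt (by omega)]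
    rw [h1, uu_succ, if_neg h2]

lemma mp_TT : MeasurePreserving (TT : (Fin n → ℝ) → Fin n → ℝ) volume volume := by
  have h1 : MeasurePreserving (Matrix.toLin' ((Equiv.addRight (1 : Fin n)).permMatrix ℝ))
      (volume : Measure (Fin n → ℝ)) volume := by
    apply measurePreserving_of_det
    rw [LinearMap.det_toLin', Matrix.det_permutation]
    rcases Int.units_eq_one_or (Equiv.Perm.sign (Equiv.addRight (1 : Fin n))) with h | h <;>
      rw [h] <;> simp
  have h2 : MeasurePreserving (Matrix.toLin' (MA : Matrix (Fin n) (Fin n) ℝ))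
      (volume : Measure (Fin n → ℝ)) volume := by
    apply measurePreserving_of_det
    rw [LinearMap.det_toLin', MA_det]; simp
  have he : (TT : (Fin n → ℝ) → Fin n → ℝ)
      = (Matrix.toLin' ((Equiv.addRight (1 : Fin n)).permMatrix ℝ))
        ∘ (Matrix.toLin' (MA : Matrix (Fin n) (Fin n) ℝ)) := funext TT_eq
  exact he ▸ h1.comp h2

omit [NeZero n]

/-! ### The positive orthant and the a.e. partition -/

def OO : Set (Fin n → ℝ) := {x | ∀ i, 0 < x i}

lemma measurableSet_OO : MeasurableSet (OO : Set (Fin n → ℝ)) := by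
  have : (OO : Set (Fin n → ℝ)) = ⋂ i, (fun x => x i) ⁻¹' Set.Ioi 0 := by
    ext x; simp [OO]
  rw [this]
  exact MeasurableSet.iInter fun i => (measurable_pi_apply i) measurableSet_Ioi

lemma measurable_uu (j : Fin (n + 1)) : Measurable (fun x : Fin n → ℝ => uu x j) := by
  induction j using Fin.cases with
  | zero => simpa using measurable_const
  | succ i => exact measurable_pi_apply i

lemma measurable_FF {h : ℝ → ℝ} (hmeas : Measurable h) :
    Measurable (FF h : (Fin n → ℝ) → ℝ≥0∞) :=
  Finset.measurable_prod _ fun i _ =>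
    ENNReal.measurable_ofReal.comp (hmeas.comp ((measurable_uu _).sub (measurable_uu _)))

lemma mem_iter_orthant (x : Fin n → ℝ) (k : Fin (n + 1)) :
    TT^[(k : ℕ)] x ∈ OO ↔ ∀ m : Fin (n + 1), m ≠ k → uu x k < uu x m := by
  have key : ∀ i : Fin n, TT^[(k : ℕ)] x i = uu x (i.succ + k) - uu x k := by
    intro i
    have h := uu_iter x (k : ℕ) i.succ
    rw [Fin.cast_val_eq_self] at h
    rw [← uu_succ (TT^[(k : ℕ)] x) i, h]
  constructor
  · intro H m hm
    obtain ⟨i, hi⟩ := Fin.exists_succ_eq.mpr (sub_ne_zero.mpr hm)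
    have h2 : i.succ + k = m := by rw [hi]; ring
    have h3 := H i
    rw [key i, h2] at h3
    exact sub_pos.mp h3
  · intro H i
    have hm : i.succ + k ≠ k := by
      intro e
      have e' : i.succ + k = 0 + k := by rw [e, zero_add]
      exact Fin.succ_ne_zero i (add_right_cancel e')
    have h3 := H _ hm
    rw [key i]
    exact sub_pos.mpr h3

noncomputable def φ (j : Fin (n + 1)) : (Fin n → ℝ) →ₗ[ℝ] ℝ :=
  Fin.cases 0 (fun m => LinearMap.proj m) j

@[simp] lemma φ_zero (x : Fin n → ℝ) : φ 0 x = 0 := by simp [φ]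
@[simp] lemma φ_succ (i : Fin n) (x : Fin n → ℝ) : φ i.succ x = x i := by simp [φ]

lemma φ_uu (j : Fin (n + 1)) (x : Fin n → ℝ) : φ j x = uu x j := by
  induction j using Fin.cases with
  | zero => simp
  | succ i => simp

lemma ae_inj : ∀ᵐ x : Fin n → ℝ, Function.Injective (uu x) := by
  rw [MeasureTheory.ae_iff]
  have hsub : {x : Fin n → ℝ | ¬ Function.Injective (uu x)}
      ⊆ ⋃ (j : Fin (n + 1)) (k : Fin (n + 1)) (_ : j ≠ k), {x | uu x j = uu x k} := by
    intro x hx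
    simp only [Set.mem_setOf_eq, Function.Injective, not_forall] at hx
    obtain ⟨j, k, hjk, hne⟩ := hx
    exact Set.mem_iUnion.mpr ⟨j, Set.mem_iUnion.mpr ⟨k, Set.mem_iUnion.mpr ⟨hne, hjk⟩⟩⟩
  refine measure_mono_null hsub ?_
  refine measure_iUnion_null fun j => measure_iUnion_null fun k =>
    measure_iUnion_null fun hjk => ?_
  have hset : {x : Fin n → ℝ | uu x j = uu x k} = ↑(LinearMap.ker (φ j - φ k)) := by
    ext x
    simp only [Set.mem_setOf_eq, SetLike.mem_coe, LinearMap.mem_ker, LinearMap.sub_apply,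
      φ_uu, sub_eq_zero]
  rw [hset]
  apply MeasureTheory.Measure.addHaar_submodule
  have hwit : ∃ v, (φ j - φ k) v ≠ 0 := by
    induction j using Fin.cases with
    | zero =>
        induction k using Fin.cases with
        | zero => exact absurd rfl hjk
        | succ b => exact ⟨Pi.single b 1, by simp⟩
    | succ a =>
        induction k using Fin.cases with
        | zero => exact ⟨Pi.single a 1, by simp⟩
        | succ b =>
            have hab : a ≠ b := by
              intro e; exact hjk (by rw [e])
            refine ⟨Pi.single a 1, ?_⟩
            simp [Pi.single_eq_of_ne (Ne.symm hab)]
  obtain ⟨v, hv⟩ := hwit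
  intro hT
  exact hv (LinearMap.mem_ker.mp (hT ▸ Submodule.mem_top (x := v)))

lemma exists_unique_min (x : Fin n → ℝ) (hx : Function.Injective (uu x)) :
    ∃! k : Fin (n + 1), ∀ m, m ≠ k → uu x k < uu x m := by
  obtain ⟨k, -, hk⟩ := Finset.exists_min_image (Finset.univ : Finset (Fin (n + 1))) (uu x)
    ⟨0, Finset.mem_univ 0⟩
  have hmain : ∀ m, m ≠ k → uu x k < uu x m := fun m hm =>
    lt_of_le_of_ne (hk m (Finset.mem_univ m)) (fun e => hm (hx e).symm)
  refine ⟨k, hmain, ?_⟩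
  intro k' hk'
  by_contra hne
  exact lt_asymm (hk' k (Ne.symm hne)) (hmain k' hne)

end Stmt13

open Stmt13 in
/-- Cyclic lemma for densities: if `h` is a probability density on `ℝ` then, with
`x₀ := 0` and `x_{n+1} := 0`,
`∫_{ℝ^n} ∏_{i=0}^{n} h(x_{i+1} − x_i) dx = (n+1) ∫_{(0,∞)^n} ∏_{i=0}^{n} h(x_{i+1} − x_i) dx`. -/
theorem stmt_13 (h : ℝ → ℝ) (hmeas : Measurable h) (hnn : ∀ x, 0 ≤ h x)
    (hint : ∫ x : ℝ, h x = 1) (n : ℕ) (hn : 1 ≤ n) :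
    (∫⁻ x : Fin n → ℝ, ∏ i : Fin (n + 1),
        ENNReal.ofReal (h ((Fin.cons 0 (Fin.snoc x 0) : Fin (n + 2) → ℝ) i.succ -
          (Fin.cons 0 (Fin.snoc x 0) : Fin (n + 2) → ℝ) i.castSucc))) =
      (n + 1) *
        ∫⁻ x in {x : Fin n → ℝ | ∀ i, 0 < x i}, ∏ i : Fin (n + 1),
          ENNReal.ofReal (h ((Fin.cons 0 (Fin.snoc x 0) : Fin (n + 2) → ℝ) i.succ -
            (Fin.cons 0 (Fin.snoc x 0) : Fin (n + 2) → ℝ) i.castSucc)) := by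
  have hNZ : NeZero n := ⟨by omega⟩
  have hFmeas : Measurable (FF h : (Fin n → ℝ) → ℝ≥0∞) := measurable_FF hmeas
  set A : Fin (n + 1) → Set (Fin n → ℝ) := fun k => TT^[(k : ℕ)] ⁻¹' OO with hA
  have hAmeas : ∀ k, MeasurableSet (A k) := fun k =>
    (mp_TT.iterate (k : ℕ)).measurable measurableSet_OO
  have hsum : ∀ᵐ x : Fin n → ℝ, FF h x = ∑ k : Fin (n + 1), (A k).indicator (FF h) x := by
    filter_upwards [ae_inj] with x hx
    obtain ⟨k₀, hk₀, huniq⟩ := exists_unique_min x hx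
    rw [Finset.sum_eq_single k₀]
    · rw [Set.indicator_of_mem]
      exact (mem_iter_orthant x k₀).mpr hk₀
    · intro k _ hk
      rw [Set.indicator_of_notMem]
      intro hmem
      exact hk (huniq k ((mem_iter_orthant x k).mp hmem))
    · simp
  have hOset : {x : Fin n → ℝ | ∀ i, 0 < x i} = OO := rfl
  calc
    (∫⁻ x : Fin n → ℝ, ∏ i : Fin (n + 1),
        ENNReal.ofReal (h ((Fin.cons 0 (Fin.snoc x 0) : Fin (n + 2) → ℝ) i.succ -
          (Fin.cons 0 (Fin.snoc x 0) : Fin (n + 2) → ℝ) i.castSucc)))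
        = ∫⁻ x : Fin n → ℝ, FF h x := lintegral_congr fun x => integrand_eq h x
    _ = ∫⁻ x : Fin n → ℝ, ∑ k : Fin (n + 1), (A k).indicator (FF h) x :=
        lintegral_congr_ae hsum
    _ = ∑ k : Fin (n + 1), ∫⁻ x : Fin n → ℝ, (A k).indicator (FF h) x :=
        lintegral_finset_sum _ fun k _ => hFmeas.indicator (hAmeas k)
    _ = ∑ _k : Fin (n + 1), ∫⁻ x in OO, FF h x := by
        refine Finset.sum_congr rfl fun k _ => ?_
        rw [lintegral_indicator (hAmeas k)]
        rw [← MeasurePreserving.setLIntegral_comp_preimage (mp_TT.iterate (k : ℕ))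
          measurableSet_OO hFmeas]
        exact lintegral_congr fun x => (FF_iter h x _).symm
    _ = ((n : ℝ≥0∞) + 1) * ∫⁻ x in OO, FF h x := by
        rw [Finset.sum_const, Finset.card_univ, Fintype.card_fin, nsmul_eq_mul]
        push_cast
        ring
    _ = (n + 1) *
        ∫⁻ x in {x : Fin n → ℝ | ∀ i, 0 < x i}, ∏ i : Fin (n + 1),
          ENNReal.ofReal (h ((Fin.cons 0 (Fin.snoc x 0) : Fin (n + 2) → ℝ) i.succ -
            (Fin.cons 0 (Fin.snoc x 0) : Fin (n + 2) → ℝ) i.castSucc)) := by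
        rw [hOset]
        congr 1
        exact (lintegral_congr fun x => integrand_eq h x).symm
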